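/- The map F(x) = (x_1³ − x_2³ + x_1x_2², x_2³ − x_1³ + x_2x_1²) on ℝ² is not a P-function: for x = (2.1, −1.9) and y = (2, −2), both (x_1−y_1)(F_1(x)−F_1(y)) < 0 and (x_2−y_2)(F_2(x)−F_2(y)) < 0. Hence the corresponding tensor is a P tensor but not a strong P tensor, so the strong P tensors form a proper subset of the P tensors. -/
import Mathlib


/-- The map
`F(x) = (x_1³ - x_2³ + x_1x_2², x_2³ - x_1³ + x_2x_1²)` is not a
P-function: for `x = (2.1, -1.9)` and `y = (2, -2)` both products
`(x_i - y_i)(F_i(x) - F_i(y))` are negative; hence `F` is not a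
P-function (so the underlying P tensor is not a strong P tensor). -/
theorem stmt_17 :
    let F : (Fin 2 → ℝ) → (Fin 2 → ℝ) :=
      fun x => ![x 0 ^ 3 - x 1 ^ 3 + x 0 * x 1 ^ 2,
                 x 1 ^ 3 - x 0 ^ 3 + x 1 * x 0 ^ 2]
    let x : Fin 2 → ℝ := ![2.1, -1.9]
    let y : Fin 2 → ℝ := ![2, -2]
    ((x 0 - y 0) * (F x 0 - F y 0) < 0) ∧
    ((x 1 - y 1) * (F x 1 - F y 1) < 0) ∧
    ¬ (∀ u v : Fin 2 → ℝ, u ≠ v →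
        ∃ i, (u i - v i) * (F u i - F v i) > 0) := by
  intro F x y
  have hxy : x ≠ y := by
    intro h
    have := congrFun h 0
    simp [x, y] at this
    norm_num at this
  refine ⟨?_, ?_, ?_⟩
  · simp only [F, x, y]; norm_num
  · simp only [F, x, y]; norm_num
  · intro h
    obtain ⟨i, hi⟩ := h x y hxy
    fin_cases i <;> simp only [F, x, y] at hi <;> norm_num at hi
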